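/- Let N be a normal subgroup of a finite group G. If k(G) = k(N) · k(G/N), then G = C_G(x) N for every x ∈ N. -/

import Mathlib

open scoped Pointwise

namespace Gallagher7

variable {G : Type} [Group G] [Finite G] (N : Subgroup G) [N.Normal]

/-- The coset of `N` containing `g`, as a type. -/
abbrev Cos (g : G) : Type := {x : G // QuotientGroup.mk' N x = QuotientGroup.mk' N g}

variable (g : G)

instance : SMul N (Cos N g) :=
  ⟨fun n x => ⟨(n : G) * x.1 * (n : G)⁻¹, by
    have hn : QuotientGroup.mk' N (n : G) = 1 := (QuotientGroup.eq_one_iff _).2 n.2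
    simp [map_mul, hn, x.2]⟩⟩

lemma smul_def (n : N) (x : Cos N g) : (n • x).1 = (n : G) * x.1 * (n : G)⁻¹ := rfl

instance : MulAction N (Cos N g) where
  one_smul x := Subtype.ext (by simp [smul_def])
  mul_smul n m x := Subtype.ext (by simp [smul_def, mul_assoc])

lemma fix_card_le (n : N) :
    Nat.card (MulAction.fixedBy (Cos N g) n) ≤ Nat.card {m : N // Commute n m} := by
  by_cases hne : Nonempty (MulAction.fixedBy (Cos N g) n)
  · obtain ⟨⟨x₀, hx₀⟩⟩ := hne
    have hx₀' : (n : G) * x₀.1 * (n : G)⁻¹ = x₀.1 := by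
      have := congrArg Subtype.val hx₀; simpa [smul_def] using this
    have c₀ : Commute (n : G) x₀.1 := by
      rw [Commute, SemiconjBy]; rw [mul_inv_eq_iff_eq_mul] at hx₀'; exact hx₀'
    have hxmem : ∀ x : MulAction.fixedBy (Cos N g) n, x₀.1⁻¹ * (x : Cos N g).1 ∈ N := by
      intro x
      have e : ((x₀.1 : G) : G ⧸ N) = ((x : Cos N g).1 : G ⧸ N) :=
        x₀.2.trans (x : Cos N g).2.symm
      exact QuotientGroup.eq.1 e
    have hxcomm : ∀ x : MulAction.fixedBy (Cos N g) n,
        Commute n (⟨x₀.1⁻¹ * (x : Cos N g).1, hxmem x⟩ : N) := by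
      intro x
      have hx' : (n : G) * (x : Cos N g).1 * (n : G)⁻¹ = (x : Cos N g).1 := by
        have := congrArg Subtype.val x.2; simpa [smul_def] using this
      have cx : Commute (n : G) (x : Cos N g).1 := by
        rw [Commute, SemiconjBy]; rw [mul_inv_eq_iff_eq_mul] at hx'; exact hx'
      have hco : Commute (n : G) (x₀.1⁻¹ * (x : Cos N g).1) := (c₀.inv_right).mul_right cx
      rw [Commute, SemiconjBy] at hco ⊢
      exact Subtype.ext (by push_cast; exact hco)
    let f : MulAction.fixedBy (Cos N g) n → {m : N // Commute n m} :=
      fun x => ⟨⟨x₀.1⁻¹ * (x : Cos N g).1, hxmem x⟩, hxcomm x⟩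
    have hinj : Function.Injective f := by
      intro x y hxy
      have h1 : x₀.1⁻¹ * (x : Cos N g).1 = x₀.1⁻¹ * (y : Cos N g).1 :=
        congrArg (fun z : {m : N // Commute n m} => ((z.1 : N) : G)) hxy
      exact Subtype.ext (Subtype.ext (mul_left_cancel h1))
    exact Nat.card_le_card_of_injective f hinj
  · rw [not_nonempty_iff] at hne
    simp [Nat.card_of_isEmpty]

lemma orbits_card_le :
    Nat.card (MulAction.orbitRel.Quotient N (Cos N g)) ≤ Nat.card (ConjClasses N) := by
  classical
  letI : Fintype N := Fintype.ofFinite N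
  letI : Fintype (Cos N g) := Fintype.ofFinite _
  letI : Fintype (Quotient (MulAction.orbitRel N (Cos N g))) := Fintype.ofFinite _
  letI : ∀ n : N, Fintype (MulAction.fixedBy (Cos N g) n) := fun n => Fintype.ofFinite _
  have burn := MulAction.sum_card_fixedBy_eq_card_orbits_mul_card_group N (Cos N g)
  have hle : (∑ n : N, Fintype.card (MulAction.fixedBy (Cos N g) n)) ≤
      ∑ n : N, Nat.card {m : N // Commute n m} := by
    apply Finset.sum_le_sum
    intro n _
    rw [← Nat.card_eq_fintype_card]
    exact fix_card_le N g n
  have hcomm : (∑ n : N, Nat.card {m : N // Commute n m}) =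
      Nat.card (ConjClasses N) * Nat.card N := by
    rw [← card_comm_eq_card_conjClasses_mul_card]
    letI : ∀ n : N, Fintype {m : N // Commute n m} := fun n => Fintype.ofFinite _
    letI : Fintype {p : N × N // Commute p.1 p.2} := Fintype.ofFinite _
    have e1 : Nat.card {p : N × N // Commute p.1 p.2} =
        ∑ n : N, Fintype.card {m : N // Commute n m} := by
      rw [Nat.card_eq_fintype_card,
        Fintype.card_congr (Equiv.subtypeProdEquivSigmaSubtype (fun a b : N => Commute a b))]
      try rw [Fintype.card_sigma]
    rw [e1]
    exact Finset.sum_congr rfl fun n _ => Nat.card_eq_fintype_card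
  have hmul : Nat.card (MulAction.orbitRel.Quotient N (Cos N g)) * Nat.card N ≤
      Nat.card (ConjClasses N) * Nat.card N := by
    calc Nat.card (MulAction.orbitRel.Quotient N (Cos N g)) * Nat.card N
        = Fintype.card (Quotient (MulAction.orbitRel N (Cos N g))) * Fintype.card N := by
          simp only [Nat.card_eq_fintype_card]
          try rfl
      _ = ∑ n : N, Fintype.card (MulAction.fixedBy (Cos N g) n) := burn.symm
      _ ≤ ∑ n : N, Nat.card {m : N // Commute n m} := hle
      _ = Nat.card (ConjClasses N) * Nat.card N := hcomm
  have hpos : 0 < Nat.card N := Nat.card_pos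
  exact Nat.le_of_mul_le_mul_right hmul hpos

lemma fiber_card_le (q : ConjClasses (G ⧸ N)) :
    Nat.card {c : ConjClasses G // ConjClasses.map (QuotientGroup.mk' N) c = q} ≤
      Nat.card (ConjClasses N) := by
  obtain ⟨gbar, rfl⟩ := q.exists_rep
  obtain ⟨g, rfl⟩ := QuotientGroup.mk'_surjective N gbar
  set π := QuotientGroup.mk' N with hπ
  have hmapmk : ∀ a : G, ConjClasses.map π (ConjClasses.mk a) = ConjClasses.mk (π a) :=
    fun a => rfl
  -- surjection from orbit space onto the fiber
  have hwd : ∀ (a b : Cos N g), MulAction.orbitRel N (Cos N g) a b →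
      ConjClasses.mk a.1 = ConjClasses.mk b.1 := by
    intro a b hab
    obtain ⟨n, hn⟩ := hab
    have hn' : (n : G) * b.1 * (n : G)⁻¹ = a.1 := by
      have := congrArg Subtype.val hn; simpa [smul_def] using this
    exact ConjClasses.mk_eq_mk_iff_isConj.2 (isConj_iff.2 ⟨(n:G), hn'⟩).symm
  let f : MulAction.orbitRel.Quotient N (Cos N g) →
      {c : ConjClasses G // ConjClasses.map π c = ConjClasses.mk (π g)} :=
    Quotient.lift (fun x : Cos N g =>
        (⟨ConjClasses.mk x.1, by rw [hmapmk, x.2]⟩ :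
          {c : ConjClasses G // ConjClasses.map π c = ConjClasses.mk (π g)}))
      (fun a b hab => Subtype.ext (hwd a b hab))
  have hsurj : Function.Surjective f := by
    rintro ⟨c, hc⟩
    obtain ⟨y, rfl⟩ := c.exists_rep
    rw [hmapmk] at hc
    obtain ⟨t0, ht0⟩ := isConj_iff.1 (ConjClasses.mk_eq_mk_iff_isConj.1 hc)
    obtain ⟨t, rfl⟩ := QuotientGroup.mk'_surjective N t0
    have hx : π (t * y * t⁻¹) = π g := by
      rw [map_mul, map_mul, map_inv]; exact ht0
    refine ⟨Quotient.mk _ (⟨t * y * t⁻¹, hx⟩ : Cos N g), ?_⟩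
    apply Subtype.ext
    show ConjClasses.mk (t * y * t⁻¹) = ConjClasses.mk y
    exact ConjClasses.mk_eq_mk_iff_isConj.2 (isConj_iff.2 ⟨t, rfl⟩).symm
  calc Nat.card {c : ConjClasses G // ConjClasses.map π c = ConjClasses.mk (π g)}
      ≤ Nat.card (MulAction.orbitRel.Quotient N (Cos N g)) :=
        Nat.card_le_card_of_surjective f hsurj
    _ ≤ Nat.card (ConjClasses N) := orbits_card_le N g

/-- Under the equality hypothesis, `G`-conjugate elements of `N` are `N`-conjugate. -/
lemma conj_transfer
    (h : Nat.card (ConjClasses G) =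
      Nat.card (ConjClasses N) * Nat.card (ConjClasses (G ⧸ N)))
    (a b : N) (hab : IsConj (a : G) (b : G)) : IsConj a b := by
  classical
  set π := QuotientGroup.mk' N with hπ
  set F : ConjClasses G → ConjClasses (G ⧸ N) := ConjClasses.map π with hF
  letI : Fintype (ConjClasses G) := Fintype.ofFinite _
  letI : Fintype (ConjClasses (G ⧸ N)) := Fintype.ofFinite _
  letI : ∀ q : ConjClasses (G ⧸ N), Fintype {c : ConjClasses G // F c = q} :=
    fun q => Fintype.ofFinite _
  have hsum : (∑ q : ConjClasses (G ⧸ N), Nat.card {c : ConjClasses G // F c = q}) =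
      Nat.card (ConjClasses G) := by
    simp only [Nat.card_eq_fintype_card]
    rw [← Fintype.card_sigma, Fintype.card_congr (Equiv.sigmaFiberEquiv F)]
  have hconst : (∑ _q : ConjClasses (G ⧸ N), Nat.card (ConjClasses N)) =
      Nat.card (ConjClasses N) * Nat.card (ConjClasses (G ⧸ N)) := by
    rw [Finset.sum_const, smul_eq_mul, mul_comm]
    simp [Nat.card_eq_fintype_card]
  have heach : ∀ q : ConjClasses (G ⧸ N),
      Nat.card {c : ConjClasses G // F c = q} = Nat.card (ConjClasses N) := by
    have := (Finset.sum_eq_sum_iff_of_le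
      (f := fun q : ConjClasses (G ⧸ N) => Nat.card {c : ConjClasses G // F c = q})
      (g := fun _ => Nat.card (ConjClasses N))
      (fun q _ => fiber_card_le N q)).1 (by rw [hsum, hconst, h])
    intro q; exact this q (Finset.mem_univ q)
  -- the fiber over the identity class
  set q₀ : ConjClasses (G ⧸ N) := ConjClasses.mk 1 with hq₀
  have hmapmk : ∀ a : G, F (ConjClasses.mk a) = ConjClasses.mk (π a) := fun a => rfl
  have hsubmk : ∀ x : N, ConjClasses.map N.subtype (ConjClasses.mk x) =
      ConjClasses.mk (x : G) := fun x => rfl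
  let ψ : ConjClasses N → {c : ConjClasses G // F c = q₀} := fun c =>
    ⟨ConjClasses.map N.subtype c, by
      obtain ⟨x, rfl⟩ := c.exists_rep
      rw [hsubmk, hmapmk, hq₀]
      congr 1
      exact (QuotientGroup.eq_one_iff (x : G)).2 x.2⟩
  have hψsurj : Function.Surjective ψ := by
    rintro ⟨c, hc⟩
    obtain ⟨y, rfl⟩ := c.exists_rep
    rw [hmapmk, hq₀] at hc
    obtain ⟨t, ht⟩ := isConj_iff.1 (ConjClasses.mk_eq_mk_iff_isConj.1 hc)
    have hy : π y = 1 := by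
      have h2 := congrArg (fun z => t⁻¹ * z * t) ht
      simpa [mul_assoc] using h2
    have hyN : y ∈ N := (QuotientGroup.eq_one_iff y).1 hy
    exact ⟨ConjClasses.mk (⟨y, hyN⟩ : N), Subtype.ext (hsubmk _)⟩
  have hψbij : Function.Bijective ψ :=
    (Nat.bijective_iff_surjective_and_card ψ).2
      ⟨hψsurj, by rw [heach q₀]⟩
  have : ψ (ConjClasses.mk a) = ψ (ConjClasses.mk b) := by
    apply Subtype.ext
    show ConjClasses.map N.subtype (ConjClasses.mk a) =
      ConjClasses.map N.subtype (ConjClasses.mk b)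
    rw [hsubmk, hsubmk]
    exact ConjClasses.mk_eq_mk_iff_isConj.2 hab
  exact ConjClasses.mk_eq_mk_iff_isConj.1 (hψbij.1 this)

end Gallagher7

/-- Gallagher's observation: if `k(G) = k(N) · k(G/N)` for `N ⊴ G`, then
`G = C_G(x) N` for every `x ∈ N`. -/
theorem stmt_7 (G : Type) [Group G] [Finite G] (N : Subgroup G) [N.Normal]
    (h : Nat.card (ConjClasses G) =
      Nat.card (ConjClasses N) * Nat.card (ConjClasses (G ⧸ N))) :
    ∀ x ∈ N, (Subgroup.centralizer {x} : Set G) * (N : Set G) = Set.univ := by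
  intro x hx
  rw [← Subgroup.mul_normal (Subgroup.centralizer {x}) N]
  rw [Subgroup.coe_eq_univ]
  rw [Subgroup.eq_top_iff']
  intro g
  have hgx : g * x * g⁻¹ ∈ N := Subgroup.Normal.conj_mem ‹N.Normal› x hx g
  have hconjG : IsConj ((⟨x, hx⟩ : N) : G) ((⟨g * x * g⁻¹, hgx⟩ : N) : G) :=
    isConj_iff.2 ⟨g, rfl⟩
  have hconjN : IsConj (⟨x, hx⟩ : N) (⟨g * x * g⁻¹, hgx⟩ : N) :=
    Gallagher7.conj_transfer N h _ _ hconjG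
  obtain ⟨n, hn⟩ := isConj_iff.1 hconjN
  have hn' : (n : G) * x * (n : G)⁻¹ = g * x * g⁻¹ := by
    have := congrArg (Subtype.val) hn
    push_cast at this
    exact this
  have hcxy : x * ((n : G)⁻¹ * g) = ((n : G)⁻¹ * g) * x := by
    calc x * ((n : G)⁻¹ * g) = (n : G)⁻¹ * ((n : G) * x * (n : G)⁻¹) * g * g⁻¹ * g := by
          group
      _ = (n : G)⁻¹ * (g * x * g⁻¹) * g * g⁻¹ * g := by rw [hn']
      _ = ((n : G)⁻¹ * g) * x := by group
  have hc : (n : G)⁻¹ * g ∈ Subgroup.centralizer {x} := by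
    rw [Subgroup.mem_centralizer_iff]
    intro y hy
    rw [Set.eq_of_mem_singleton hy]
    exact hcxy
  have : g = (n : G) * ((n : G)⁻¹ * g) := by group
  rw [this]
  exact Subgroup.mul_mem _
    (Subgroup.mem_sup_right n.2)
    (Subgroup.mem_sup_left hc)
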